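/- There is a constant C > 0 such that for all ε > 0, all t ≥ 0 and all r ≥ 1, ∫₀ᵗ (ε^{−2}·D_ε(r,s))² ds ≤ C·r^{−2}. -/

import Mathlib

/-- The entire function `φ(x) = ∑_{j=0}^∞ x^j/(2j+1)!`. -/
noncomputable def phi (x : ℝ) : ℝ := ∑' j : ℕ, x ^ j / (Nat.factorial (2 * j + 1) : ℝ)

/-- The damped-wave Fourier symbol `D_ε(r,t) = e^{−t/(2ε²)}·t·φ(t²(1/(4ε⁴) − r²/ε²))`. -/
noncomputable def D (ε r t : ℝ) : ℝ :=
  Real.exp (-t / (2 * ε ^ 2)) * t * phi (t ^ 2 * (1 / (4 * ε ^ 4) - r ^ 2 / ε ^ 2))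

open Complex in
lemma hasSum_sinh' (z : ℂ) :
    HasSum (fun n : ℕ => z ^ (2 * n + 1) / (Nat.factorial (2 * n + 1) : ℂ)) (Complex.sinh z) := by
  have h := Complex.hasSum_sin (z * Complex.I)
  rw [Complex.sin_mul_I] at h
  refine (hasSum_mul_right_iff Complex.I_ne_zero).mp ?_
  convert h using 2 with n
  · rfl
  have key : ((-1 : ℂ)) ^ n * (z * Complex.I) ^ (2 * n + 1) = z ^ (2 * n + 1) * Complex.I := by
    rw [show ((z * Complex.I) ^ (2 * n + 1))
        = z ^ (2 * n + 1) * ((Complex.I ^ 2) ^ n * Complex.I) by ring, Complex.I_sq]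
    rw [show ((-1 : ℂ)) ^ n * (z ^ (2 * n + 1) * ((-1 : ℂ) ^ n * Complex.I))
        = ((-1 : ℂ) * (-1)) ^ n * (z ^ (2 * n + 1) * Complex.I) by rw [mul_pow]; ring]
    norm_num
  rw [key]
  ring

lemma energy_bound (m k : ℝ) (hm : 0 < m) (hk : 0 < k) (x v : ℝ → ℝ)
    (hx : ∀ s, HasDerivAt x (v s) s)
    (hv : ∀ s, HasDerivAt v ((-v s - k * x s) / m) s)
    (hx0 : x 0 = 0) (hv0 : v 0 = 1 / m) (t : ℝ) :
    (∫ s in (0:ℝ)..t, (x s) ^ 2) ≤ 1 / (2 * k) := by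
  set Φ : ℝ → ℝ := fun s =>
    (m ^ 2 / 2 * v s ^ 2 + m * (x s * v s) + (1 + m * k) / 2 * x s ^ 2) / k with hΦdef
  have hΦ : ∀ s, HasDerivAt Φ (-(x s ^ 2)) s := by
    intro s
    have d1 : HasDerivAt (fun s => v s ^ 2)
        ((2 : ℕ) * v s ^ 1 * ((-v s - k * x s) / m)) s := (hv s).pow 2
    have d2 : HasDerivAt (fun s => x s * v s)
        (v s * v s + x s * ((-v s - k * x s) / m)) s := (hx s).mul (hv s)
    have d3 : HasDerivAt (fun s => x s ^ 2) ((2 : ℕ) * x s ^ 1 * v s) s := (hx s).pow 2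
    have := (((d1.const_mul (m ^ 2 / 2)).add (d2.const_mul m)).add
      (d3.const_mul ((1 + m * k) / 2))).div_const k
    refine this.congr_deriv ?_
    field_simp
    ring
  have hcx : Continuous x := by
    have : Differentiable ℝ x := fun s => (hx s).differentiableAt
    exact this.continuous
  have hint : (∫ s in (0:ℝ)..t, (x s) ^ 2) = (-Φ t) - (-Φ 0) := by
    refine intervalIntegral.integral_eq_sub_of_hasDerivAt (f := fun s => -Φ s) (fun s _ => ?_) ?_
    · exact (hΦ s).neg.congr_deriv (by ring)
    · exact (hcx.pow 2).intervalIntegrable 0 t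
  have hΦ0 : Φ 0 = 1 / (2 * k) := by
    rw [hΦdef]; simp only [hx0, hv0]; field_simp; ring
  have hΦt : 0 ≤ Φ t := by
    rw [hΦdef]
    have hnum : 0 ≤ m ^ 2 / 2 * v t ^ 2 + m * (x t * v t) + (1 + m * k) / 2 * x t ^ 2 := by
      nlinarith [sq_nonneg (m * v t + x t), sq_nonneg (x t), mul_pos hm hk]
    positivity
  rw [hint, ← hΦ0]
  linarith

lemma phi_zero : phi 0 = 1 := by
  rw [phi, tsum_eq_single 0]
  · norm_num
  · intro j hj
    rw [zero_pow hj]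
    simp

lemma sphi (a : ℝ) (ω : ℂ) (hω : ω ^ 2 = (a : ℂ)) (hω0 : ω ≠ 0) (s : ℝ) :
    s * phi (s ^ 2 * a) = (Complex.sinh (ω * s) / ω).re := by
  have h2 : HasSum (fun n : ℕ => ((a ^ n * s ^ (2 * n + 1) / (Nat.factorial (2 * n + 1) : ℝ) : ℝ) : ℂ))
      (Complex.sinh (ω * s) / ω) := by
    refine (hasSum_mul_right_iff hω0).mp ?_
    rw [div_mul_cancel₀ _ hω0]
    convert hasSum_sinh' (ω * s) using 2 with n
    · rfl
    push_cast
    rw [show ((ω * (s : ℂ)) ^ (2 * n + 1)) = (ω ^ 2) ^ n * ω * (s : ℂ) ^ (2 * n + 1) by ring, hω]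
    ring
  have h3 : HasSum (fun n : ℕ => a ^ n * s ^ (2 * n + 1) / (Nat.factorial (2 * n + 1) : ℝ))
      ((Complex.sinh (ω * s) / ω).re) := by
    have := h2.mapL Complex.reCLM
    simpa only [Complex.reCLM_apply, Complex.ofReal_re] using this
  rw [← h3.tsum_eq, phi, ← tsum_mul_left]
  congr 1
  funext n
  rw [mul_pow, ← pow_mul]
  ring

lemma hasDerivAt_cexp_mul (c : ℂ) (s : ℝ) :
    HasDerivAt (fun s : ℝ => Complex.exp (c * s)) (c * Complex.exp (c * s)) s := by
  have h1 : HasDerivAt (fun s : ℝ => c * (s : ℂ)) c s := by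
    simpa using (Complex.ofRealCLM.hasDerivAt (x := s)).const_mul c
  simpa [mul_comm] using h1.cexp

lemma HasDerivAt.creal {g : ℝ → ℂ} {g' : ℂ} {s : ℝ} (h : HasDerivAt g g' s) :
    HasDerivAt (fun t => (g t).re) g'.re s :=
  Complex.reCLM.hasFDerivAt.comp_hasDerivAt s h

set_option maxHeartbeats 1600000 in
/-- There is `C > 0` such that for all `ε > 0`, `t ≥ 0` and `r ≥ 1`,
`∫₀ᵗ (ε^{−2}D_ε(r,s))² ds ≤ C r^{−2}` (variance bound for the stochastic convolution). -/
theorem dampedWave_variance_bound :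
    ∃ C : ℝ, 0 < C ∧ ∀ ε t r : ℝ, 0 < ε → 0 ≤ t → 1 ≤ r →
      (∫ s in (0:ℝ)..t, (D ε r s / ε ^ 2) ^ 2) ≤ C / r ^ 2 := by
  refine ⟨1 / 2, by norm_num, ?_⟩
  intro ε t r hε ht hr
  have hm : (0:ℝ) < ε ^ 2 := by positivity
  have hk : (0:ℝ) < r ^ 2 := by nlinarith
  have hεne : ε ≠ 0 := ne_of_gt hε
  have hgoal : (1:ℝ) / (2 * r ^ 2) = (1 / 2) / r ^ 2 := by ring
  rw [← hgoal]
  by_cases hcrit : (1:ℝ) / (4 * ε ^ 4) - r ^ 2 / ε ^ 2 = 0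
  · -- critical case
    have h0 : r ^ 2 * (4 * ε ^ 2) = 1 := by
      field_simp at hcrit
      nlinarith [hcrit, sq_nonneg ε]
    set c : ℝ := 2 * ε ^ 2 with hc
    have hcne : c ≠ 0 := by positivity
    set X : ℝ → ℝ := fun s => Real.exp (-s / c) * s / ε ^ 2 with hX
    set V : ℝ → ℝ := fun s => Real.exp (-s / c) * (1 - s / c) / ε ^ 2 with hV
    have hE : ∀ s : ℝ, HasDerivAt (fun s : ℝ => Real.exp (-s / c))
        (-(1 / c) * Real.exp (-s / c)) s := by
      intro s
      have h1 : HasDerivAt (fun s : ℝ => -s / c) (-(1 / c)) s := by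
        exact ((hasDerivAt_id s).neg.div_const c).congr_deriv (by ring)
      exact ((Real.hasDerivAt_exp (-s / c)).comp s h1).congr_deriv (g' := -(1 / c) * Real.exp (-s / c)) (by ring)
    have hr2 : r ^ 2 = 1 / (4 * ε ^ 2) := by
      rw [eq_div_iff (by positivity)]; linarith [h0]
    have hfun : ∀ s, D ε r s / ε ^ 2 = X s := by
      intro s
      rw [hX]
      simp only [D, hcrit, mul_zero, phi_zero, mul_one]
      rw [hc]
    simp only [hfun]
    have hx : ∀ s, HasDerivAt X (V s) s := by
      intro s
      have := ((hE s).mul (hasDerivAt_id s)).div_const (ε ^ 2)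
      refine this.congr_deriv ?_
      rw [hV]
      simp only [id]
      field_simp
      ring
    have hv : ∀ s, HasDerivAt V ((-V s - r ^ 2 * X s) / ε ^ 2) s := by
      intro s
      have hlin : HasDerivAt (fun s : ℝ => 1 - s / c) (-(1 / c)) s := by
        exact ((hasDerivAt_const s (1:ℝ)).sub ((hasDerivAt_id s).div_const c)).congr_deriv (by ring)
      have := ((hE s).mul hlin).div_const (ε ^ 2)
      refine this.congr_deriv ?_
      rw [hX, hV, hr2]
      field_simp
      ring
    have hx0 : X 0 = 0 := by simp [hX]
    have hv0 : V 0 = 1 / ε ^ 2 := by simp [hV]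
    exact energy_bound (ε ^ 2) (r ^ 2) hm hk X V hx hv hx0 hv0 t
  · -- non-critical case
    set α : ℝ := 1 / (4 * ε ^ 4) - r ^ 2 / ε ^ 2 with hα
    have hεC : (ε : ℂ) ≠ 0 := by exact_mod_cast hεne
    obtain ⟨ω, hω2, hω0⟩ : ∃ ω : ℂ, ω ^ 2 = (α : ℂ) ∧ ω ≠ 0 := by
      rcases le_or_gt 0 α with hpos | hneg
      · refine ⟨(Real.sqrt α : ℂ), ?_, ?_⟩
        · rw [← Complex.ofReal_pow, Real.sq_sqrt hpos]
        · simp only [ne_eq, Complex.ofReal_eq_zero]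
          intro hs
          exact hcrit (by nlinarith [Real.sq_sqrt hpos, hs])
      · refine ⟨(Real.sqrt (-α) : ℂ) * Complex.I, ?_, ?_⟩
        · rw [mul_pow, Complex.I_sq, ← Complex.ofReal_pow, Real.sq_sqrt (by linarith)]
          push_cast; ring
        · refine mul_ne_zero ?_ Complex.I_ne_zero
          simp only [ne_eq, Complex.ofReal_eq_zero]
          intro hs
          have := Real.sq_sqrt (le_of_lt (neg_pos.mpr hneg))
          rw [hs] at this
          nlinarith
    have hω2'' : 4 * (ε : ℂ) ^ 4 * ω ^ 2 = 1 - 4 * (ε : ℂ) ^ 2 * (r : ℂ) ^ 2 := by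
      have hre : 4 * ε ^ 4 * α = 1 - 4 * ε ^ 2 * r ^ 2 := by
        rw [hα]; field_simp
      rw [hω2]; exact_mod_cast hre
    set c1 : ℂ := ω - 1 / (2 * (ε : ℂ) ^ 2) with hc1
    set c2 : ℂ := -ω - 1 / (2 * (ε : ℂ) ^ 2) with hc2
    set w : ℂ := 2 * ω * (ε : ℂ) ^ 2 with hw
    have hwne : w ≠ 0 := by
      rw [hw]; exact mul_ne_zero (mul_ne_zero two_ne_zero hω0) (pow_ne_zero 2 hεC)
    set f : ℝ → ℂ := fun s => (Complex.exp (c1 * s) - Complex.exp (c2 * s)) / w with hf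
    set g : ℝ → ℂ := fun s =>
      (c1 * Complex.exp (c1 * s) - c2 * Complex.exp (c2 * s)) / w with hg
    have hC1 : (ε : ℂ) ^ 2 * c1 ^ 2 + c1 + (r : ℂ) ^ 2 = 0 := by
      rw [hc1]; field_simp; linear_combination hω2''
    have hC2 : (ε : ℂ) ^ 2 * c2 ^ 2 + c2 + (r : ℂ) ^ 2 = 0 := by
      rw [hc2]; field_simp; linear_combination hω2''
    have hfun : ∀ s, D ε r s / ε ^ 2 = (f s).re := by
      intro s
      have h1 : D ε r s = Real.exp (-s / (2 * ε ^ 2)) * ((Complex.sinh (ω * s) / ω).re) := by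
        simp only [D]; rw [mul_assoc, sphi α ω hω2 hω0 s]
      have e1 : Complex.exp (c1 * (s : ℂ))
          = Complex.exp (ω * s) * Complex.exp ((-s / (2 * ε ^ 2) : ℝ) : ℂ) := by
        rw [← Complex.exp_add]; congr 1; rw [hc1]; push_cast; field_simp; ring
      have e2 : Complex.exp (c2 * (s : ℂ))
          = Complex.exp (-(ω * s)) * Complex.exp ((-s / (2 * ε ^ 2) : ℝ) : ℂ) := by
        rw [← Complex.exp_add]; congr 1; rw [hc2]; push_cast; field_simp; ring
      have h2 : f s = ((Real.exp (-s / (2 * ε ^ 2)) / ε ^ 2 : ℝ) : ℂ)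
          * (Complex.sinh (ω * s) / ω) := by
        rw [hf]
        simp only [e1, e2, Complex.sinh, Complex.ofReal_exp, hw]
        push_cast
        field_simp
      rw [h1, h2, Complex.re_ofReal_mul]
      ring
    simp only [hfun]
    have hdf : ∀ s, HasDerivAt (fun s => (f s).re) ((g s).re) s := by
      intro s
      exact (((hasDerivAt_cexp_mul c1 s).sub (hasDerivAt_cexp_mul c2 s)).div_const w).creal
    have hdg : ∀ s : ℝ, HasDerivAt g
        ((c1 * (c1 * Complex.exp (c1 * (s : ℂ))) - c2 * (c2 * Complex.exp (c2 * (s : ℂ)))) / w) s := by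
      intro s
      exact (((hasDerivAt_cexp_mul c1 s).const_mul c1).sub
        ((hasDerivAt_cexp_mul c2 s).const_mul c2)).div_const w
    have hdv : ∀ s, HasDerivAt (fun s => (g s).re)
        ((-(g s).re - r ^ 2 * (f s).re) / ε ^ 2) s := by
      intro s
      have hid : (c1 * (c1 * Complex.exp (c1 * (s : ℂ))) - c2 * (c2 * Complex.exp (c2 * (s : ℂ)))) / w
          = (((ε ^ 2)⁻¹ : ℝ) : ℂ) * (-(g s) - ((r ^ 2 : ℝ) : ℂ) * f s) := by
        have hid0 : (ε : ℂ) ^ 2 * (c1 * (c1 * Complex.exp (c1 * (s : ℂ)))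
              - c2 * (c2 * Complex.exp (c2 * (s : ℂ))))
            = -(c1 * Complex.exp (c1 * (s : ℂ)) - c2 * Complex.exp (c2 * (s : ℂ)))
              - ((r : ℂ)) ^ 2 * (Complex.exp (c1 * (s : ℂ)) - Complex.exp (c2 * (s : ℂ))) := by
          linear_combination Complex.exp (c1 * (s : ℂ)) * hC1 - Complex.exp (c2 * (s : ℂ)) * hC2
        have hε2 : (((ε ^ 2 : ℝ)⁻¹ : ℝ) : ℂ) * (ε : ℂ) ^ 2 = 1 := by
          push_cast; field_simp
        have hA : c1 * (c1 * Complex.exp (c1 * (s : ℂ))) - c2 * (c2 * Complex.exp (c2 * (s : ℂ)))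
            = (((ε ^ 2 : ℝ)⁻¹ : ℝ) : ℂ)
              * (-(c1 * Complex.exp (c1 * (s : ℂ)) - c2 * Complex.exp (c2 * (s : ℂ)))
                - ((r : ℂ)) ^ 2 * (Complex.exp (c1 * (s : ℂ)) - Complex.exp (c2 * (s : ℂ)))) := by
          rw [← hid0]
          linear_combination (-(c1 * c1 * Complex.exp (c1 * (s : ℂ))
            - c2 * (c2 * Complex.exp (c2 * (s : ℂ))))) * hε2
        rw [hg, hf, hA]
        push_cast
        ring
      have hd := ((hdg s).creal)
      rw [hid] at hd
      convert hd using 1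
      simp only [Complex.re_ofReal_mul, Complex.sub_re, Complex.neg_re]
      rw [div_eq_inv_mul]
    have hx0 : (f 0).re = 0 := by
      rw [hf]; simp
    have hv0 : (g 0).re = 1 / ε ^ 2 := by
      have : g 0 = (((1 : ℝ) / ε ^ 2 : ℝ) : ℂ) := by
        rw [hg]
        simp only [Complex.ofReal_zero, mul_zero, Complex.exp_zero, mul_one]
        rw [hc1, hc2, hw]
        push_cast
        field_simp
        ring
      rw [this, Complex.ofReal_re]
    exact energy_bound (ε ^ 2) (r ^ 2) hm hk (fun s => (f s).re) (fun s => (g s).re)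
      hdf hdv hx0 hv0 t
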